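/- arXiv:1201.5744 — 3 statements merged into one kernel-verified Lean document; each statement's English description precedes it below -/
import Mathlib

section
/- Let c₁,…,c_n be a basis of ℝⁿ, U a k-dimensional subspace of ℝⁿ, and π : ℝⁿ → U the orthogonal projection onto U. Then one can choose indices j₁ < … < j_k such that π(c_{j₁}),…,π(c_{j_k}) form a basis of U and, for every vector v = a₁c₁ + … + a_nc_n with |aᵢ| ≤ N for all i (N > 0), the coordinates b₁,…,b_k of π(v) in this basis satisfy |bᵢ| ≤ n²·N for all i. -/
open Finset Matrix

theorem projection_basis_bounded_coords (n k : ℕ)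
    (c : Module.Basis (Fin n) ℝ (EuclideanSpace ℝ (Fin n)))
    (U : Submodule ℝ (EuclideanSpace ℝ (Fin n)))
    (hU : Module.finrank ℝ U = k) :
    ∃ (j : Fin k → Fin n), StrictMono j ∧
      ∃ bU : Module.Basis (Fin k) ℝ U,
        (∀ s : Fin k, (bU s : EuclideanSpace ℝ (Fin n)) = U.orthogonalProjectionOnto (c (j s))) ∧
        ∀ (N : ℝ), 0 < N → ∀ v : EuclideanSpace ℝ (Fin n),
          (∀ i, |c.repr v i| ≤ N) →
          ∀ s : Fin k, |bU.repr (U.orthogonalProjectionOnto v) s| ≤ (n : ℝ) ^ 2 * N := by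
  classical
  set w : Fin n → U := fun i => U.orthogonalProjectionOnto (c i) with hwdef
  have hspan : Submodule.span ℝ (Set.range w) = ⊤ := by
    have hsurj : Function.Surjective ((U.orthogonalProjectionOnto).toLinearMap) :=
      fun u => ⟨u, Submodule.orthogonalProjectionOnto_mem_subspace_eq_self u⟩
    have hr : Set.range w = ((U.orthogonalProjectionOnto).toLinearMap) '' Set.range c := by
      rw [← Set.range_comp]; rfl
    rw [hr, ← Submodule.map_span, c.span_eq, Submodule.map_top,
      LinearMap.range_eq_top.mpr hsurj]
  obtain ⟨e⟩ : Nonempty (Module.Basis (Fin k) ℝ U) := ⟨Module.finBasisOfFinrankEq ℝ U hU⟩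
  have hexg : ∃ g : Fin k → Fin n, e.det (w ∘ g) ≠ 0 := by
    obtain ⟨t, hts, htspan, htli⟩ := exists_linearIndependent ℝ (Set.range w)
    have htfin : t.Finite := htli.set_finite_of_isNoetherian
    haveI := htfin.fintype
    have hcard : Fintype.card t = k := by
      let bt : Module.Basis t ℝ U := Module.Basis.mk htli
        (by rw [Subtype.range_coe, htspan, hspan])
      rw [← hU, Module.finrank_eq_card_basis bt]
    let eqt : Fin k ≃ t := (Fintype.equivFinOfCardEq hcard).symm
    choose g hg using fun s : Fin k => hts (eqt s).2
    have hwg : w ∘ g = (fun x : t => (x : U)) ∘ eqt := funext fun s => hg s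
    have hli : LinearIndependent ℝ (w ∘ g) := by
      rw [hwg]; exact htli.comp eqt eqt.injective
    have hsp : Submodule.span ℝ (Set.range (w ∘ g)) = ⊤ :=
      hli.span_eq_top_of_card_eq_finrank' (by simp [hU])
    exact ⟨g, ((Module.Basis.is_basis_iff_det e).mp ⟨hli, hsp⟩).ne_zero⟩
  obtain ⟨g, hg⟩ := hexg
  obtain ⟨f₀, -, hf₀⟩ := Finset.exists_max_image Finset.univ
    (fun f : Fin k → Fin n => |e.det (w ∘ f)|) ⟨g, Finset.mem_univ g⟩
  have hDf₀ : 0 < |e.det (w ∘ f₀)| :=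
    lt_of_lt_of_le (abs_pos.mpr hg) (hf₀ g (Finset.mem_univ g))
  have hdet₀ : e.det (w ∘ f₀) ≠ 0 := abs_pos.mp hDf₀
  obtain ⟨hli₀, -⟩ := (Module.Basis.is_basis_iff_det e).mpr (isUnit_iff_ne_zero.mpr hdet₀)
  have hinj₀ : Function.Injective f₀ := fun a b hab =>
    hli₀.injective (show (w ∘ f₀) a = (w ∘ f₀) b by simp [Function.comp, hab])
  set σ := Tuple.sort f₀ with hσ
  set j := f₀ ∘ σ with hj
  have hjmono : StrictMono j :=
    (Tuple.monotone_sort f₀).strictMono_of_injective (hinj₀.comp σ.injective)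
  have hmatj : e.toMatrix (w ∘ j) = (e.toMatrix (w ∘ f₀)).submatrix id σ := by
    ext t s; simp [Module.Basis.toMatrix_apply, Matrix.submatrix_apply, hj]
  have hdet_eq : |e.det (w ∘ j)| = |e.det (w ∘ f₀)| := by
    rw [Module.Basis.det_apply, Module.Basis.det_apply, hmatj, Matrix.det_permute', abs_mul,
      abs_unit_intCast, one_mul]
  have hmax : ∀ f : Fin k → Fin n, |e.det (w ∘ f)| ≤ |e.det (w ∘ j)| := fun f =>
    (hf₀ f (Finset.mem_univ f)).trans_eq hdet_eq.symm
  have hdetj : e.det (w ∘ j) ≠ 0 := by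
    intro h; rw [h, abs_zero] at hdet_eq; exact hDf₀.ne' hdet_eq.symm
  have hlij : LinearIndependent ℝ (w ∘ j) := hli₀.comp σ σ.injective
  have hspj : Submodule.span ℝ (Set.range (w ∘ j)) = ⊤ :=
    hlij.span_eq_top_of_card_eq_finrank' (by simp [hU])
  let bU : Module.Basis (Fin k) ℝ U := Module.Basis.mk hlij hspj.ge
  have hbUcoe : ⇑bU = w ∘ j := Module.Basis.coe_mk _ _
  have hdetA : (e.toMatrix (w ∘ j)).det ≠ 0 := by rw [← Module.Basis.det_apply]; exact hdetj
  -- Cramer's rule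
  have key : ∀ x : U, ∀ s : Fin k,
      (e.toMatrix (w ∘ j)).det * bU.repr x s
        = ((e.toMatrix (w ∘ j)).updateCol s (e.repr x)).det := by
    intro x s
    have h1 : e.toMatrix (w ∘ j) *ᵥ ⇑(bU.repr x) = ⇑(e.repr x) := by
      rw [← hbUcoe]; exact Module.Basis.toMatrix_mulVec_repr bU e x
    have h2 : Matrix.cramer (e.toMatrix (w ∘ j)) (e.repr x)
        = (e.toMatrix (w ∘ j)).det • ⇑(bU.repr x) := by
      rw [← h1, Matrix.cramer_eq_adjugate_mulVec, Matrix.mulVec_mulVec,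
        Matrix.adjugate_mul, Matrix.smul_mulVec, Matrix.one_mulVec]
    have h3 := congrFun h2 s
    rw [Matrix.cramer_apply] at h3
    simpa using h3.symm
  have hb1 : ∀ i s, |bU.repr (w i) s| ≤ 1 := by
    intro i s
    have hupd : (e.toMatrix (w ∘ j)).updateCol s (e.repr (w i))
        = e.toMatrix (w ∘ Function.update j s i) := by
      ext t s'
      by_cases h : s' = s <;>
        simp [Matrix.updateCol_apply, Module.Basis.toMatrix_apply, Function.update_apply, h]
    have hk := key (w i) s
    rw [hupd, ← Module.Basis.det_apply] at hk
    have habs : |e.det (w ∘ j)| * |bU.repr (w i) s|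
        = |e.det (w ∘ Function.update j s i)| := by rw [← abs_mul, hk, Module.Basis.det_apply]
    have hle : |e.det (w ∘ j)| * |bU.repr (w i) s|
        ≤ |e.det (w ∘ j)| * 1 := by
      rw [habs, mul_one]; exact hmax _
    exact le_of_mul_le_mul_left hle (abs_pos.mpr hdetj)
  refine ⟨j, hjmono, bU, ?_, ?_⟩
  · intro s
    rw [show bU s = w (j s) from congrFun hbUcoe s]
  · intro N hN v hv s
    have hπv : (U.orthogonalProjectionOnto v : U) = ∑ i, c.repr v i • w i := by
      conv_lhs => rw [← c.sum_repr v]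
      rw [map_sum]
      exact Finset.sum_congr rfl fun i _ => by rw [_root_.map_smul]
    have hrepr : bU.repr (U.orthogonalProjectionOnto v) s
        = ∑ i, c.repr v i * bU.repr (w i) s := by
      rw [hπv, map_sum]
      rw [Finsupp.finset_sum_apply]
      exact Finset.sum_congr rfl fun i _ => by rw [_root_.map_smul, Finsupp.smul_apply, smul_eq_mul]
    rw [hrepr]
    calc |∑ i, c.repr v i * bU.repr (w i) s|
        ≤ ∑ i, |c.repr v i * bU.repr (w i) s| := Finset.abs_sum_le_sum_abs _ _
      _ ≤ ∑ _i : Fin n, N := by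
          refine Finset.sum_le_sum fun i _ => ?_
          rw [abs_mul]
          calc |c.repr v i| * |bU.repr (w i) s| ≤ N * 1 :=
                mul_le_mul (hv i) (hb1 i s) (abs_nonneg _) hN.le
            _ = N := mul_one N
      _ = (n : ℝ) * N := by simp [Finset.sum_const, nsmul_eq_mul]
      _ ≤ (n : ℝ) ^ 2 * N := by
          refine mul_le_mul_of_nonneg_right ?_ hN.le
          exact_mod_cast Nat.le_self_pow two_ne_zero n
end

section
/- Let c₁,…,c_n be a basis of ℝⁿ and U a k-dimensional subspace with orthogonal projection π. Then there exists a subset {j₁,…,j_k} ⊆ {1,…,n} such that π(c_{j₁}),…,π(c_{j_k}) form a basis of U and every π(c_l), for l ∈ {1,…,n}, can be written as a linear combination of π(c_{j₁}),…,π(c_{j_k}) with all coefficients of absolute value at most n. -/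
theorem projection_basis_coeff_le_n (n k : ℕ)
    (c : Module.Basis (Fin n) ℝ (EuclideanSpace ℝ (Fin n)))
    (U : Submodule ℝ (EuclideanSpace ℝ (Fin n)))
    (hU : Module.finrank ℝ U = k) :
    ∃ (j : Fin k → Fin n), Function.Injective j ∧
      ∃ bU : Module.Basis (Fin k) ℝ U,
        (∀ s : Fin k, (bU s : EuclideanSpace ℝ (Fin n)) = Submodule.orthogonalProjectionOnto U (c (j s))) ∧
        ∀ (l : Fin n) (s : Fin k),
          |bU.repr (Submodule.orthogonalProjectionOnto U (c l)) s| ≤ (n : ℝ) := by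
  classical
  rcases Nat.eq_zero_or_pos k with hk0 | hkpos
  · subst hk0
    exact ⟨Fin.elim0, fun a => a.elim0, Module.finBasisOfFinrankEq ℝ U hU,
      fun s => s.elim0, fun l s => s.elim0⟩
  haveI : Nonempty (Fin k) := ⟨⟨0, hkpos⟩⟩
  set v : Fin n → U := fun i => Submodule.orthogonalProjectionOnto U (c i) with hvdef
  -- the projections span U
  have hspan : Submodule.span ℝ (Set.range v) = ⊤ := by
    rw [eq_top_iff]
    rintro u -
    have h1 : (Submodule.orthogonalProjectionOnto U) (u : EuclideanSpace ℝ (Fin n)) = u :=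
      Submodule.orthogonalProjectionOnto_mem_subspace_eq_self u
    have h2 : u = ∑ i, c.repr (u : EuclideanSpace ℝ (Fin n)) i • v i := by
      conv_lhs => rw [← h1, ← c.sum_repr (u : EuclideanSpace ℝ (Fin n))]
      simp only [v, map_sum, map_smul]
    rw [h2]
    exact Submodule.sum_mem _ fun i _ =>
      Submodule.smul_mem _ _ (Submodule.subset_span ⟨i, rfl⟩)
  -- there is an injective j with v ∘ j linearly independent
  obtain ⟨t, hts, htspan, htind⟩ := exists_linearIndependent ℝ (Set.range v)
  rw [hspan] at htspan
  have htspan' : ⊤ ≤ Submodule.span ℝ (Set.range ((↑) : t → U)) := by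
    rw [Subtype.range_coe]; exact htspan.ge
  haveI : Fintype t := FiniteDimensional.fintypeBasisIndex (Module.Basis.mk htind htspan')
  have hcard : Fintype.card t = k := by
    rw [← hU, Module.finrank_eq_card_basis (Module.Basis.mk htind htspan')]
  obtain ⟨e⟩ : Nonempty (Fin k ≃ t) := ⟨(Fintype.equivFinOfCardEq hcard).symm⟩
  choose g hg using fun x : t => (hts x.2 : (x : U) ∈ Set.range v)
  have hvje : v ∘ (g ∘ e) = (↑) ∘ e := by
    funext a; exact hg (e a)
  have hindex : LinearIndependent ℝ (v ∘ (g ∘ e)) := by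
    rw [hvje]; exact htind.comp e e.injective
  -- pick a fixed basis of U, and maximize |det| over all choices of k columns
  set b0 : Module.Basis (Fin k) ℝ U := Module.finBasisOfFinrankEq ℝ U hU with hb0
  set f : (Fin k → Fin n) → ℝ := fun j => |b0.det (v ∘ j)| with hf
  obtain ⟨j0, -, hmax⟩ := Finset.exists_max_image Finset.univ f ⟨g ∘ e, Finset.mem_univ _⟩
  have hmax' : ∀ j : Fin k → Fin n, f j ≤ f j0 := fun j => hmax j (Finset.mem_univ j)
  -- the det at g ∘ e is nonzero
  have hcardk : Fintype.card (Fin k) = Module.finrank ℝ U := by simp [hU]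
  have hfex : 0 < f (g ∘ e) := by
    have hsp : Submodule.span ℝ (Set.range (v ∘ (g ∘ e))) = ⊤ :=
      hindex.span_eq_top_of_card_eq_finrank hcardk
    have := (Module.Basis.is_basis_iff_det b0).mp ⟨hindex, hsp⟩
    rw [hf]
    exact abs_pos.mpr (isUnit_iff_ne_zero.mp this)
  have hfj0 : 0 < f j0 := lt_of_lt_of_le hfex (hmax' _)
  have hdet0 : b0.det (v ∘ j0) ≠ 0 := by
    intro h; simp only [hf, h, abs_zero, lt_self_iff_false] at hfj0
  obtain ⟨hind0, hsp0⟩ := (Module.Basis.is_basis_iff_det b0).mpr (isUnit_iff_ne_zero.mpr hdet0)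
  have hinj0 : Function.Injective j0 := by
    intro a b hab
    have h2 : (v ∘ j0) a = (v ∘ j0) b := by simp [Function.comp, hab]
    exact hind0.injective h2
  -- build the basis
  set bU : Module.Basis (Fin k) ℝ U := basisOfLinearIndependentOfCardEqFinrank hind0 hcardk with hbU
  have hbUcoe : ∀ a, bU a = v (j0 a) := by
    intro a
    rw [hbU, coe_basisOfLinearIndependentOfCardEqFinrank]
    rfl
  refine ⟨j0, hinj0, bU, fun s => by rw [hbUcoe s], ?_⟩
  -- coefficient bound via Cramer's rule
  intro l s
  have h1n : (1 : ℝ) ≤ n := by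
    have hkn : k ≤ n := by
      have h := Submodule.finrank_le (R := ℝ) U
      rwa [hU, finrank_euclideanSpace_fin] at h
    exact_mod_cast le_trans hkpos hkn
  set A : Matrix (Fin k) (Fin k) ℝ := b0.toMatrix (v ∘ j0) with hA
  have hcoe : ⇑bU = v ∘ j0 := funext hbUcoe
  have hAbU : A = b0.toMatrix bU := by rw [hA, hcoe]
  have hdetA : A.det ≠ 0 := by
    rw [hA, ← Module.Basis.det_apply]; exact hdet0
  set col : Fin k → ℝ := ⇑(b0.repr (v l)) with hcol
  set w : Fin k → ℝ := ⇑(bU.repr (v l)) with hw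
  have hmv : A.mulVec w = col := by
    rw [hAbU, hw, hcol]
    exact Module.Basis.toMatrix_mulVec_repr bU b0 (v l)
  -- cramer A col = A.det • w
  have hcanc : ∀ x : Fin k → ℝ, A⁻¹.mulVec (A.mulVec x) = x := by
    intro x
    rw [Matrix.mulVec_mulVec, Matrix.nonsing_inv_mul A (isUnit_iff_ne_zero.mpr hdetA),
      Matrix.one_mulVec]
  have hcr : Matrix.cramer A col = A.det • w := by
    have h1 : A.mulVec (Matrix.cramer A col) = A.mulVec (A.det • w) := by
      rw [Matrix.mulVec_cramer, Matrix.mulVec_smul, hmv]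
    calc Matrix.cramer A col = A⁻¹.mulVec (A.mulVec (Matrix.cramer A col)) := (hcanc _).symm
      _ = A⁻¹.mulVec (A.mulVec (A.det • w)) := by rw [h1]
      _ = A.det • w := hcanc _
  have hws : w s = Matrix.cramer A col s / A.det := by
    have := congrFun hcr s
    simp only [Pi.smul_apply, smul_eq_mul] at this
    field_simp [hdetA]
    linarith [this]
  -- the cramer determinant is the det of another column choice
  have hupdate : A.updateCol s col = b0.toMatrix (v ∘ Function.update j0 s l) := by
    funext r t
    by_cases h : t = s
    · subst h
      simp [Matrix.updateCol_apply, hcol, Module.Basis.toMatrix_apply, Function.update_self]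
    · simp [Matrix.updateCol_apply, h, hA, Module.Basis.toMatrix_apply, Function.update_of_ne h]
  have hle : |Matrix.cramer A col s| ≤ |A.det| := by
    rw [Matrix.cramer_apply, hupdate, hA, ← Module.Basis.det_apply, ← Module.Basis.det_apply]
    exact hmax' (Function.update j0 s l)
  have : |w s| ≤ 1 := by
    rw [hws, abs_div]
    rw [div_le_one (abs_pos.mpr hdetA)]
    exact hle
  calc |bU.repr (Submodule.orthogonalProjectionOnto U (c l)) s| = |w s| := by rw [hw]
    _ ≤ 1 := this
    _ ≤ n := h1n
end

section
/- Let L ⊂ ℝᵈ be a full-rank lattice with basis B₁,…,B_d, let U be an m-dimensional subspace of ℝᵈ with m < d, and let π be the orthogonal projection onto U. Then there is a constant C > 0 (depending only on L and U) such that for every positive integer N there exists a nonzero lattice point X = Σᵢ bᵢBᵢ with bᵢ ∈ ℤ, |bᵢ| ≤ 2N for all i, and ‖π(X)‖ ≤ C · N^(−(d−m)/m). -/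
lemma coord_abs_le_norm {m : ℕ} (x : EuclideanSpace ℝ (Fin m)) (j : Fin m) : |x j| ≤ ‖x‖ := by
  rw [EuclideanSpace.norm_eq]
  have h1 : |x j| = Real.sqrt (‖x j‖ ^ 2) := by
    rw [Real.sqrt_sq_eq_abs, abs_norm, Real.norm_eq_abs]
  rw [h1]
  apply Real.sqrt_le_sqrt
  exact Finset.single_le_sum (f := fun i => ‖x i‖ ^ 2) (fun i _ => sq_nonneg _) (Finset.mem_univ j)

theorem pigeonhole_small_projection (d m : ℕ) (hm : 0 < m) (hmd : m < d)
    (B : Module.Basis (Fin d) ℝ (EuclideanSpace ℝ (Fin d)))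
    (U : Submodule ℝ (EuclideanSpace ℝ (Fin d)))
    (hU : Module.finrank ℝ U = m) :
    ∃ C : ℝ, 0 < C ∧ ∀ N : ℕ, 0 < N →
      ∃ b : Fin d → ℤ, b ≠ 0 ∧ (∀ i, |b i| ≤ 2 * (N : ℤ)) ∧
        ‖(Submodule.orthogonalProjectionOnto U (∑ i, (b i : ℝ) • B i) : EuclideanSpace ℝ (Fin d))‖ ≤
          C * (N : ℝ) ^ (-(((d : ℝ) - (m : ℝ)) / (m : ℝ))) := by
  classical
  have hd : 0 < d := lt_trans hm hmd
  set R : ℝ := ∑ i, ‖B i‖ with hRdef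
  have hR : 0 < R := by
    have h0 : (0:ℝ) < ‖B ⟨0, hd⟩‖ := norm_pos_iff.mpr (B.ne_zero _)
    exact lt_of_lt_of_le h0
      (Finset.single_le_sum (fun i _ => norm_nonneg (B i)) (Finset.mem_univ _))
  have hsm : (0:ℝ) < Real.sqrt m := Real.sqrt_pos.mpr (by exact_mod_cast hm)
  refine ⟨2 * Real.sqrt m * (2 * R + 1), by positivity, ?_⟩
  intro N hN
  have hN1 : (1:ℝ) ≤ (N:ℝ) := by exact_mod_cast hN
  -- orthonormal basis of U
  let o : OrthonormalBasis (Fin m) ℝ U :=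
    (stdOrthonormalBasis ℝ U).reindex (finCongr hU)
  -- linear map collecting coordinates of the projection
  let T : EuclideanSpace ℝ (Fin d) →ₗ[ℝ] EuclideanSpace ℝ (Fin m) :=
    (o.repr.toLinearEquiv.toLinearMap).comp ((Submodule.orthogonalProjectionOnto U).toLinearMap)
  have hTnorm : ∀ x, ‖T x‖ = ‖((Submodule.orthogonalProjectionOnto U x : U) : EuclideanSpace ℝ (Fin d))‖ := by
    intro x
    exact o.repr.norm_map (Submodule.orthogonalProjectionOnto U x)
  have hTle : ∀ x, ‖T x‖ ≤ ‖x‖ := by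
    intro x
    rw [hTnorm]
    have h1 := (Submodule.orthogonalProjectionOnto U).le_opNorm x
    have h2 : ‖Submodule.orthogonalProjectionOnto U‖ ≤ 1 := Submodule.orthogonalProjectionOnto_norm_le U
    calc ‖((Submodule.orthogonalProjectionOnto U x : U) : EuclideanSpace ℝ (Fin d))‖
        = ‖(Submodule.orthogonalProjectionOnto U x : U)‖ := rfl
      _ ≤ ‖Submodule.orthogonalProjectionOnto U‖ * ‖x‖ := h1
      _ ≤ 1 * ‖x‖ := by
          exact mul_le_mul_of_nonneg_right h2 (norm_nonneg x)
      _ = ‖x‖ := one_mul _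
  -- bound on lattice vectors
  have hvbound : ∀ c : Fin d → ℤ, (∀ i, |c i| ≤ 2 * (N:ℤ)) →
      ‖T (∑ i, (c i : ℝ) • B i)‖ ≤ 2 * N * R := by
    intro c hc
    refine le_trans (hTle _) ?_
    refine le_trans (norm_sum_le _ _) ?_
    rw [hRdef, Finset.mul_sum]
    apply Finset.sum_le_sum
    intro i _
    rw [norm_smul, Real.norm_eq_abs]
    have h1 : |(c i : ℝ)| ≤ 2 * N := by
      have := hc i
      have : ((|c i| : ℤ) : ℝ) ≤ ((2 * N : ℤ) : ℝ) := by exact_mod_cast this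
      push_cast at this
      exact this
    exact mul_le_mul_of_nonneg_right h1 (norm_nonneg _)
    -- exponent and number of boxes
  set e : ℝ := (d:ℝ)/(m:ℝ) with hedef
  have hm' : (0:ℝ) < m := by exact_mod_cast hm
  have hNpos : (0:ℝ) < N := by linarith
  have hNpow_pos : (0:ℝ) < (N:ℝ) ^ e := Real.rpow_pos_of_pos hNpos _
  have hNpow1 : (1:ℝ) ≤ (N:ℝ) ^ e := Real.one_le_rpow hN1 (by positivity)
  set K : ℕ := ⌈(N:ℝ) ^ e⌉₊ with hKdef
  have hK0 : 0 < K := Nat.ceil_pos.mpr hNpow_pos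
  have hK0' : (0:ℝ) < K := by exact_mod_cast hK0
  have hKge : (N:ℝ) ^ e ≤ K := Nat.le_ceil _
  have hKle : (K:ℝ) ≤ 2 * (N:ℝ) ^ e := by
    have := Nat.ceil_lt_add_one (le_of_lt hNpow_pos)
    rw [hKdef]
    linarith
  -- cardinality comparison
  have hcard : Fintype.card (Fin m → Fin K) < Fintype.card (Fin d → Fin (2*N+1)) := by
    rw [Fintype.card_fun, Fintype.card_fun, Fintype.card_fin, Fintype.card_fin,
      Fintype.card_fin, Fintype.card_fin]
    have h1 : ((K:ℝ)) ^ m ≤ (2 * (N:ℝ)^e) ^ m :=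
      pow_le_pow_left₀ (le_of_lt hK0') hKle m
    have h2 : (2 * (N:ℝ)^e) ^ m = 2^m * (N:ℝ)^(d:ℕ) := by
      rw [mul_pow]
      congr 1
      rw [← Real.rpow_natCast ((N:ℝ)^e) m, ← Real.rpow_mul (le_of_lt hNpos)]
      rw [hedef, div_mul_cancel₀ _ (ne_of_gt hm'), Real.rpow_natCast]
    have h3 : (2:ℝ)^m * (N:ℝ)^(d:ℕ) < ((2*N+1 : ℕ):ℝ)^d := by
      have hA : (2:ℝ)^m < 2^d := pow_lt_pow_right₀ one_lt_two hmd
      have hB : ((2*N : ℕ):ℝ)^d ≤ ((2*N+1 : ℕ):ℝ)^d := by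
        apply pow_le_pow_left₀ (by positivity)
        exact_mod_cast Nat.le_succ _
      have hC : ((2*N : ℕ):ℝ)^d = 2^d * (N:ℝ)^(d:ℕ) := by
        push_cast; rw [mul_pow]
      have hD : (0:ℝ) < (N:ℝ)^(d:ℕ) := by positivity
      nlinarith
    have : ((K:ℝ))^m < ((2*N+1 : ℕ):ℝ)^d := by
      calc ((K:ℝ))^m ≤ 2^m * (N:ℝ)^(d:ℕ) := by rw [← h2]; exact h1
        _ < _ := h3
    exact_mod_cast this
  -- the box map
  set S : ℝ := 2 * N * R + 1 with hSdef
  have hS : 0 < S := by positivity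
  let cf : (Fin d → Fin (2*N+1)) → (Fin d → ℤ) := fun b i => ((b i : ℕ) : ℤ)
  have hcf : ∀ b i, 0 ≤ cf b i ∧ cf b i ≤ 2 * (N:ℤ) := by
    intro b i
    constructor
    · exact Int.natCast_nonneg _
    · have := (b i).isLt
      have h2 : (b i : ℕ) ≤ 2 * N := by omega
      simp only [cf]
      exact_mod_cast h2
  have hcf' : ∀ b i, |cf b i| ≤ 2 * (N:ℤ) := by
    intro b i
    rw [abs_of_nonneg (hcf b i).1]
    exact (hcf b i).2
  let w : (Fin d → Fin (2*N+1)) → EuclideanSpace ℝ (Fin m) :=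
    fun b => T (∑ i, ((cf b i : ℤ) : ℝ) • B i)
  have hwcoord : ∀ b j, |w b j| < S := by
    intro b j
    have h1 : |w b j| ≤ ‖w b‖ := coord_abs_le_norm _ _
    have h2 : ‖w b‖ ≤ 2*N*R := hvbound (cf b) (hcf' b)
    rw [hSdef]; linarith
  set t : (Fin d → Fin (2*N+1)) → Fin m → ℝ :=
    fun b j => (w b j + S) * K / (2*S) with htdef
  have ht : ∀ b j, 0 ≤ t b j ∧ t b j < K := by
    intro b j
    have h1 := hwcoord b j
    rw [abs_lt] at h1
    constructor
    · apply div_nonneg _ (by linarith)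
      apply mul_nonneg (by linarith) (le_of_lt hK0')
    · rw [div_lt_iff₀ (by linarith)]
      nlinarith [h1.1, h1.2, hK0']
  have hfl : ∀ b j, 0 ≤ ⌊t b j⌋ ∧ ⌊t b j⌋ < (K:ℤ) := by
    intro b j
    exact ⟨Int.floor_nonneg.mpr (ht b j).1, Int.floor_lt.mpr (by exact_mod_cast (ht b j).2)⟩
  let f : (Fin d → Fin (2*N+1)) → (Fin m → Fin K) :=
    fun b j => ⟨(⌊t b j⌋).toNat, by
      have := hfl b j
      omega⟩
  obtain ⟨x, y, hxy, hfxy⟩ := Fintype.exists_ne_map_eq_of_card_lt f hcard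
  refine ⟨fun i => cf x i - cf y i, ?_, ?_, ?_⟩
  · intro h
    apply hxy
    funext i
    have := congrFun h i
    simp only [cf, Pi.zero_apply, sub_eq_zero] at this
    have : (x i : ℕ) = (y i : ℕ) := by exact_mod_cast this
    exact Fin.ext this
  · intro i
    show |cf x i - cf y i| ≤ 2 * (N:ℤ)
    have h1 := hcf x i
    have h2 := hcf y i
    rw [abs_le]
    omega
  · -- norm bound
    have hsub : T (∑ i, ((cf x i - cf y i : ℤ):ℝ) • B i) = w x - w y := by
      simp only [w]
      rw [← map_sub, ← Finset.sum_sub_distrib]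
      congr 1
      apply Finset.sum_congr rfl
      intro i _
      push_cast
      rw [sub_smul]
    have hcoorddiff : ∀ j, |w x j - w y j| ≤ 2*S/K := by
      intro j
      have hfe : ⌊t x j⌋ = ⌊t y j⌋ := by
        have := congrFun hfxy j
        have h1 := hfl x j
        have h2 := hfl y j
        simp only [f, Fin.mk.injEq] at this
        omega
      have h3 : |t x j - t y j| < 1 := Int.abs_sub_lt_one_of_floor_eq_floor hfe
      have h4 : t x j - t y j = (w x j - w y j) * (K / (2*S)) := by
        rw [htdef]
        field_simp
        ring
      rw [h4, abs_mul, abs_of_nonneg (by positivity : (0:ℝ) ≤ (K:ℝ)/(2*S))] at h3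
      have h5 : |w x j - w y j| * (K / (2*S)) * (2*S/K) < 1 * (2*S/K) := by
        apply mul_lt_mul_of_pos_right h3 (by positivity)
      have h6 : |w x j - w y j| * (K / (2*S)) * (2*S/K) = |w x j - w y j| := by
        field_simp
      rw [h6, one_mul] at h5
      exact le_of_lt h5
    have hnorm : ‖w x - w y‖ ≤ Real.sqrt m * (2*S/K) := by
      rw [EuclideanSpace.norm_eq]
      have hb : ∀ j : Fin m, ‖(w x - w y) j‖^2 ≤ (2*S/K)^2 := by
        intro j
        have := hcoorddiff j
        have h0 : ‖(w x - w y) j‖ = |w x j - w y j| := by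
          simp [Real.norm_eq_abs]
        rw [h0]
        exact pow_le_pow_left₀ (abs_nonneg _) this 2
      calc Real.sqrt (∑ j, ‖(w x - w y) j‖^2)
          ≤ Real.sqrt (∑ _j : Fin m, (2*S/K)^2) :=
            Real.sqrt_le_sqrt (Finset.sum_le_sum (fun j _ => hb j))
        _ = Real.sqrt ((m:ℝ) * (2*S/K)^2) := by
            rw [Finset.sum_const, Finset.card_univ, Fintype.card_fin, nsmul_eq_mul]
        _ = Real.sqrt m * (2*S/K) := by
            rw [Real.sqrt_mul (by positivity), Real.sqrt_sq (by positivity)]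
    -- final computation
    have hexp : -(((d:ℝ) - (m:ℝ)) / (m:ℝ)) = 1 - e := by
      rw [hedef, sub_div, div_self (ne_of_gt hm'), neg_sub]
    have hrw : (N:ℝ) ^ (-(((d:ℝ) - (m:ℝ)) / (m:ℝ))) = (N:ℝ) / (N:ℝ)^e := by
      rw [hexp, Real.rpow_sub hNpos, Real.rpow_one]
    have hSN : S ≤ (N:ℝ) * (2*R + 1) := by
      have hq : (N:ℝ) * (2*R + 1) = 2*N*R + N := by ring
      rw [hSdef, hq]
      linarith
    have hmain : Real.sqrt m * (2*S/K) ≤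
        2 * Real.sqrt m * (2*R+1) * ((N:ℝ) / (N:ℝ)^e) := by
      have h1 : 2*S/K ≤ 2*((N:ℝ)*(2*R+1))/K := by
        gcongr
      have h2 : 2*((N:ℝ)*(2*R+1))/K ≤ 2*((N:ℝ)*(2*R+1))/(N:ℝ)^e := by
        gcongr
      have h3 : 2*((N:ℝ)*(2*R+1))/(N:ℝ)^e = 2*(2*R+1) * ((N:ℝ)/(N:ℝ)^e) := by
        field_simp
      calc Real.sqrt m * (2*S/K) ≤ Real.sqrt m * (2*((N:ℝ)*(2*R+1))/(N:ℝ)^e) := by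
            apply mul_le_mul_of_nonneg_left (le_trans h1 h2) (le_of_lt hsm)
        _ = 2 * Real.sqrt m * (2*R+1) * ((N:ℝ)/(N:ℝ)^e) := by rw [h3]; ring
    rw [hrw]
    calc ‖(Submodule.orthogonalProjectionOnto U (∑ i, ((cf x i - cf y i : ℤ) : ℝ) • B i) :
            EuclideanSpace ℝ (Fin d))‖
        = ‖T (∑ i, ((cf x i - cf y i : ℤ):ℝ) • B i)‖ := (hTnorm _).symm
      _ = ‖w x - w y‖ := by rw [hsub]
      _ ≤ Real.sqrt m * (2*S/K) := hnorm
      _ ≤ _ := hmain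
end
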